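/- For every integer n ≥ 7, λ(K₂ ∨ I_{n−2}) < λ(K⁺_{⌊n/2⌋,⌈n/2⌉}). -/

import Mathlib

open SimpleGraph

/-- The spectral radius (largest adjacency eigenvalue) of a finite simple graph. -/
noncomputable def specRad {V : Type*} [Fintype V] (G : SimpleGraph V) : ℝ :=
  letI : DecidableEq V := Classical.decEq V
  letI : DecidableRel G.Adj := Classical.decRel _
  sSup (spectrum ℝ (G.adjMatrix ℝ))

/-- `KplusAB a b` : the complete bipartite graph `K_{a,b}` with one extra edge
(between vertices `0` and `1`) inside the part of size `a`. -/
def KplusAB (a b : ℕ) : SimpleGraph (Fin a ⊕ Fin b) where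
  Adj x y :=
    match x, y with
    | .inl i, .inl j => (i.val = 0 ∧ j.val = 1) ∨ (i.val = 1 ∧ j.val = 0)
    | .inl _, .inr _ => True
    | .inr _, .inl _ => True
    | .inr _, .inr _ => False
  symm := by refine ⟨?_⟩; rintro (i | i) (j | j) h <;> simp_all <;> tauto
  loopless := by refine ⟨?_⟩; rintro (i | i) h <;> simp_all <;> omega

/-- `K₂ ∨ I_t` : join of an edge with an independent set of `t` vertices. -/
def K2JoinI (t : ℕ) : SimpleGraph (Fin 2 ⊕ Fin t) where
  Adj x y :=
    match x, y with
    | .inl i, .inl j => i ≠ j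
    | .inl _, .inr _ => True
    | .inr _, .inl _ => True
    | .inr _, .inr _ => False
  symm := by refine ⟨?_⟩; rintro (i | i) (j | j) h <;> simp_all <;> exact fun h' => h h'.symm
  loopless := by refine ⟨?_⟩; rintro (i | i) h <;> simp_all

section helpers
open Matrix

variable {V : Type*} [Fintype V] [DecidableEq V]

lemma algmap_mulVec (μ : ℝ) (v : V → ℝ) :
    (algebraMap ℝ (Matrix V V ℝ) μ) *ᵥ v = μ • v := by
  funext x
  simp [Matrix.algebraMap_eq_diagonal, Matrix.mulVec_diagonal]

lemma mem_spectrum_of_eig (M : Matrix V V ℝ) {μ : ℝ} {v : V → ℝ} (hv : v ≠ 0)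
    (h : M *ᵥ v = μ • v) : μ ∈ spectrum ℝ M := by
  rw [spectrum.mem_iff]
  intro hU
  rw [Matrix.isUnit_iff_isUnit_det, isUnit_iff_ne_zero] at hU
  apply hU
  rw [← Matrix.exists_mulVec_eq_zero_iff]
  exact ⟨v, hv, by rw [Matrix.sub_mulVec, h, algmap_mulVec, sub_self]⟩

lemma exists_eig_of_mem (M : Matrix V V ℝ) {μ : ℝ} (h : μ ∈ spectrum ℝ M) :
    ∃ v : V → ℝ, v ≠ 0 ∧ M *ᵥ v = μ • v := by
  rw [spectrum.mem_iff] at h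
  rw [Matrix.isUnit_iff_isUnit_det, isUnit_iff_ne_zero, not_not,
    ← Matrix.exists_mulVec_eq_zero_iff] at h
  obtain ⟨v, hv, hve⟩ := h
  refine ⟨v, hv, ?_⟩
  rw [Matrix.sub_mulVec, algmap_mulVec, sub_eq_zero] at hve
  exact hve.symm

lemma spec_bddAbove (M : Matrix V V ℝ) : BddAbove (spectrum ℝ M) :=
  (Matrix.finite_spectrum M).bddAbove

end helpers

open Matrix

lemma sum_fin_ite {a : ℕ} (ha : 2 ≤ a) (x y : ℝ) :
    ∑ i : Fin a, (if (i : ℕ) ≤ 1 then x else y) = 2 * x + ((a : ℝ) - 2) * y := by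
  have h : ∀ i : Fin a, (if (i : ℕ) ≤ 1 then x else y)
      = y + ((if i = ⟨0, by omega⟩ then x - y else 0) + (if i = ⟨1, by omega⟩ then x - y else 0)) := by
    rintro ⟨iv, hi⟩
    simp only [Fin.mk.injEq]
    rcases Nat.lt_or_ge iv 2 with h2 | h2
    · interval_cases iv <;> simp
    · rw [if_neg (by omega), if_neg (by omega), if_neg (by omega)]; ring
  rw [Finset.sum_congr rfl fun i _ => h i, Finset.sum_add_distrib, Finset.sum_add_distrib,
    Finset.sum_const, Finset.sum_ite_eq' Finset.univ, Finset.sum_ite_eq' Finset.univ]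
  simp [Finset.card_univ]
  ring

lemma sum_left (a b : ℕ) (ha : 3 ≤ a) [inst : DecidableRel (KplusAB a b).Adj]
    (x y : ℝ) (i : Fin a) :
    ∑ i' : Fin a, (if (KplusAB a b).Adj (.inl i) (.inl i') then (1:ℝ) else 0) *
      (if (i' : ℕ) ≤ 1 then x else y)
    = if (i : ℕ) ≤ 1 then x else 0 := by
  have hA : ∀ i' : Fin a, (KplusAB a b).Adj (.inl i) (.inl i') ↔
      ((i.val = 0 ∧ i'.val = 1) ∨ (i.val = 1 ∧ i'.val = 0)) := fun _ => Iff.rfl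
  rcases Nat.lt_or_ge (i : ℕ) 2 with h2 | h2
  · rcases Nat.lt_or_ge (i : ℕ) 1 with h1 | h1
    · have : ∀ i' : Fin a, (if (KplusAB a b).Adj (.inl i) (.inl i') then (1:ℝ) else 0) *
          (if (i' : ℕ) ≤ 1 then x else y) = if i' = ⟨1, by omega⟩ then x else 0 := by
        rintro ⟨iv, hi⟩
        simp only [hA, Fin.mk.injEq]
        rcases Nat.lt_or_ge iv 2 with hc | hc
        · interval_cases iv <;> simp <;> omega
        · rw [if_neg (by omega), zero_mul, if_neg (by omega)]
      rw [Finset.sum_congr rfl fun i' _ => this i', Finset.sum_ite_eq' Finset.univ]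
      rw [if_pos (Finset.mem_univ _), if_pos (by omega)]
    · have : ∀ i' : Fin a, (if (KplusAB a b).Adj (.inl i) (.inl i') then (1:ℝ) else 0) *
          (if (i' : ℕ) ≤ 1 then x else y) = if i' = ⟨0, by omega⟩ then x else 0 := by
        rintro ⟨iv, hi⟩
        simp only [hA, Fin.mk.injEq]
        rcases Nat.lt_or_ge iv 2 with hc | hc
        · interval_cases iv <;> simp <;> omega
        · rw [if_neg (by omega), zero_mul, if_neg (by omega)]
      rw [Finset.sum_congr rfl fun i' _ => this i', Finset.sum_ite_eq' Finset.univ]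
      rw [if_pos (Finset.mem_univ _), if_pos (by omega)]
  · have : ∀ i' : Fin a, (if (KplusAB a b).Adj (.inl i) (.inl i') then (1:ℝ) else 0) *
        (if (i' : ℕ) ≤ 1 then x else y) = 0 := by
      intro i'
      rw [if_neg (by rw [hA]; omega), zero_mul]
    rw [Finset.sum_congr rfl fun i' _ => this i', Finset.sum_const, smul_zero, if_neg (by omega)]

lemma kplus_eig (a b : ℕ) (ha : 3 ≤ a) [inst : DecidableRel (KplusAB a b).Adj]
    (x y μ : ℝ) (e1 : x + (b : ℝ) = μ * x) (e2 : (b : ℝ) = μ * y)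
    (e3 : 2 * x + ((a : ℝ) - 2) * y = μ) :
    (KplusAB a b).adjMatrix ℝ *ᵥ
      (Sum.elim (fun i : Fin a => if (i : ℕ) ≤ 1 then x else y) (fun _ : Fin b => (1:ℝ)))
      = μ • (Sum.elim (fun i : Fin a => if (i : ℕ) ≤ 1 then x else y) (fun _ : Fin b => (1:ℝ))) := by
  funext z
  rcases z with i | j
  · simp only [Matrix.mulVec, dotProduct, Fintype.sum_sum_type, adjMatrix_apply,
      Sum.elim_inl, Sum.elim_inr, Pi.smul_apply, smul_eq_mul, mul_one]
    have hadj : ∀ j : Fin b, (KplusAB a b).Adj (Sum.inl i) (Sum.inr j) := fun j => trivial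
    have hsum2 : ∑ j : Fin b, (if (KplusAB a b).Adj (.inl i) (.inr j) then (1:ℝ) else 0) = b := by
      rw [Finset.sum_congr rfl fun j _ => if_pos (hadj j)]
      simp [Finset.card_univ]
    rw [hsum2, sum_left a b ha x y i]
    by_cases h : (i : ℕ) ≤ 1
    · rw [if_pos h, if_pos h]; exact e1
    · rw [if_neg h, if_neg h, zero_add]; exact e2
  · simp only [Matrix.mulVec, dotProduct, Fintype.sum_sum_type, adjMatrix_apply,
      Sum.elim_inl, Sum.elim_inr, Pi.smul_apply, smul_eq_mul, mul_one]
    have hadj : ∀ i : Fin a, (KplusAB a b).Adj (Sum.inr j) (Sum.inl i) := fun i => trivial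
    have hnadj : ∀ j' : Fin b, ¬ (KplusAB a b).Adj (Sum.inr j) (Sum.inr j') := fun j' h => h
    have hsum1 : ∑ i : Fin a, (if (KplusAB a b).Adj (.inr j) (.inl i) then (1:ℝ) else 0) *
        (if (i : ℕ) ≤ 1 then x else y) = 2 * x + ((a : ℝ) - 2) * y := by
      rw [Finset.sum_congr rfl fun i _ => by rw [if_pos (hadj i), one_mul],
        sum_fin_ite (by omega) x y]
    have hsum2 : ∑ j' : Fin b, (if (KplusAB a b).Adj (.inr j) (.inr j') then (1:ℝ) else 0) = 0 := by
      rw [Finset.sum_congr rfl fun j' _ => if_neg (hnadj j')]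
      simp
    rw [hsum1, hsum2, add_zero]
    exact e3

lemma k2_upper (t : ℕ) [DecidableEq (Fin 2 ⊕ Fin t)] [inst : DecidableRel (K2JoinI t).Adj] {μ r : ℝ}
    (hr : 3 < r) (hr2 : r ^ 2 = r + 2 * (t : ℝ))
    (hμ : μ ∈ spectrum ℝ ((K2JoinI t).adjMatrix ℝ)) : μ ≤ r := by
  by_contra hcon
  push_neg at hcon
  obtain ⟨v, hv, hve⟩ := exists_eig_of_mem _ hμ
  have hμ3 : 3 < μ := lt_trans hr hcon
  have hinr : ∀ j : Fin t, v (.inl 0) + v (.inl 1) = μ * v (.inr j) := by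
    intro j
    have h := congrFun hve (.inr j)
    simp only [Matrix.mulVec, dotProduct, Fintype.sum_sum_type, adjMatrix_apply,
      Pi.smul_apply, smul_eq_mul] at h
    have hadj : ∀ i : Fin 2, (K2JoinI t).Adj (Sum.inr j) (Sum.inl i) := fun i => trivial
    have hnadj : ∀ j' : Fin t, ¬ (K2JoinI t).Adj (Sum.inr j) (Sum.inr j') := fun j' hc => hc
    rw [Finset.sum_congr rfl fun (i : Fin 2) _ => by rw [if_pos (hadj i), one_mul]] at h
    rw [Finset.sum_congr rfl fun (j' : Fin t) _ => by rw [if_neg (hnadj j'), zero_mul]] at h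
    rw [Finset.sum_const_zero, add_zero, Fin.sum_univ_two] at h
    exact h
  have hinl0 : v (.inl 1) + (∑ j : Fin t, v (.inr j)) = μ * v (.inl 0) := by
    have h := congrFun hve (.inl 0)
    simp only [Matrix.mulVec, dotProduct, Fintype.sum_sum_type, adjMatrix_apply,
      Pi.smul_apply, smul_eq_mul] at h
    have hadj : ∀ j : Fin t, (K2JoinI t).Adj (Sum.inl (0 : Fin 2)) (Sum.inr j) := fun j => trivial
    rw [Finset.sum_congr rfl fun (j : Fin t) _ => by rw [if_pos (hadj j), one_mul]] at h
    rw [Fin.sum_univ_two] at h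
    have hno : ¬ (K2JoinI t).Adj (Sum.inl (0 : Fin 2)) (Sum.inl 0) := (K2JoinI t).loopless.irrefl _
    have hyes : (K2JoinI t).Adj (Sum.inl (0 : Fin 2)) (Sum.inl 1) := by
      show (0 : Fin 2) ≠ 1; decide
    rw [if_neg hno, if_pos hyes, zero_mul, one_mul, zero_add] at h
    exact h
  have hinl1 : v (.inl 0) + (∑ j : Fin t, v (.inr j)) = μ * v (.inl 1) := by
    have h := congrFun hve (.inl 1)
    simp only [Matrix.mulVec, dotProduct, Fintype.sum_sum_type, adjMatrix_apply,
      Pi.smul_apply, smul_eq_mul] at h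
    have hadj : ∀ j : Fin t, (K2JoinI t).Adj (Sum.inl (1 : Fin 2)) (Sum.inr j) := fun j => trivial
    rw [Finset.sum_congr rfl fun (j : Fin t) _ => by rw [if_pos (hadj j), one_mul]] at h
    rw [Fin.sum_univ_two] at h
    have hno : ¬ (K2JoinI t).Adj (Sum.inl (1 : Fin 2)) (Sum.inl 1) := (K2JoinI t).loopless.irrefl _
    have hyes : (K2JoinI t).Adj (Sum.inl (1 : Fin 2)) (Sum.inl 0) := by
      show (1 : Fin 2) ≠ 0; decide
    rw [if_neg hno, if_pos hyes, zero_mul, one_mul, add_zero] at h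
    exact h
  set S := ∑ j : Fin t, v (.inr j) with hS
  set s := v (.inl 0) + v (.inl 1) with hsdef
  have hMS : μ * S = (t : ℝ) * s := by
    rw [hS, Finset.mul_sum, Finset.sum_congr rfl fun j _ => (hinr j).symm,
      Finset.sum_const, Finset.card_univ, Fintype.card_fin, nsmul_eq_mul]
  have hadd : s + 2 * S = μ * s := by rw [hsdef]; linarith
  have hs0 : s * (μ ^ 2 - μ - 2 * (t : ℝ)) = 0 := by
    linear_combination (-μ) * hadd + 2 * hMS
  have hpos : 0 < μ ^ 2 - μ - 2 * (t : ℝ) := by nlinarith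
  have hs : s = 0 := by
    rcases mul_eq_zero.mp hs0 with h | h
    · exact h
    · linarith
  have hSz : S = 0 := by
    have hz : μ * S = 0 := by rw [hMS, hs, mul_zero]
    rcases mul_eq_zero.mp hz with h | h
    · linarith
    · exact h
  have hv0 : v (.inl 0) = 0 := by
    have h1 : v (.inl 1) = μ * v (.inl 0) := by rw [← hinl0, hSz, add_zero]
    have h2 : v (.inl 0) = μ * v (.inl 1) := by rw [← hinl1, hSz, add_zero]
    have hz : v (.inl 0) * (μ ^ 2 - 1) = 0 := by nlinarith [h1, h2]
    rcases mul_eq_zero.mp hz with h | h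
    · exact h
    · nlinarith
  have hv1 : v (.inl 1) = 0 := by
    have h1 : v (.inl 1) = μ * v (.inl 0) := by rw [← hinl0, hSz, add_zero]
    rw [h1, hv0, mul_zero]
  apply hv
  funext z
  rcases z with i | j
  · rw [Pi.zero_apply]
    fin_cases i
    · exact hv0
    · exact hv1
  · rw [Pi.zero_apply]
    have hj := hinr j
    rw [hs] at hj
    rcases mul_eq_zero.mp hj.symm with h | h
    · exfalso; linarith
    · exact h

set_option maxHeartbeats 2000000 in
theorem K2JoinI_lt_Kplus (n : ℕ) (hn : 7 ≤ n) :
    specRad (K2JoinI (n - 2)) < specRad (KplusAB (n / 2) ((n + 1) / 2)) := by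
  unfold specRad
  set a := n / 2 with hadef
  set b := (n + 1) / 2 with hbdef
  set t := n - 2 with htdef
  have ha3 : 3 ≤ a := by omega
  have hb4 : 4 ≤ b := by omega
  set A : ℝ := (a : ℝ) with hA
  set B : ℝ := (b : ℝ) with hB
  have hT : ((t : ℕ) : ℝ) = (n : ℝ) - 2 := by
    rw [htdef]; push_cast [Nat.cast_sub (by omega : 2 ≤ n)]; ring
  -- real arithmetic facts about a, b, n
  have hAB : 2 * ((n:ℝ) - 2) + 1 ≤ A * B ∧ (A - 2) * B ≤ 3 * (A * B - 2 * ((n:ℝ) - 2)) := by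
    rcases Nat.even_or_odd n with ⟨k, hk⟩ | ⟨k, hk⟩
    · have hak : a = k := by omega
      have hbk : b = k := by omega
      have hk4 : 4 ≤ k := by omega
      have hAk : A = (k : ℝ) := by rw [hA, hak]
      have hBk : B = (k : ℝ) := by rw [hB, hbk]
      have hnk : (n : ℝ) = 2 * (k : ℝ) := by
        have : (n : ℝ) = ((k + k : ℕ) : ℝ) := by rw [← hk]
        push_cast at this; linarith
      have hkR : (4 : ℝ) ≤ (k : ℝ) := by exact_mod_cast hk4
      constructor <;> nlinarith
    · have hak : a = k := by omega
      have hbk : b = k + 1 := by omega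
      have hk3 : 3 ≤ k := by omega
      have hAk : A = (k : ℝ) := by rw [hA, hak]
      have hBk : B = (k : ℝ) + 1 := by rw [hB, hbk]; push_cast; ring
      have hnk : (n : ℝ) = 2 * (k : ℝ) + 1 := by
        have : (n : ℝ) = ((2 * k + 1 : ℕ) : ℝ) := by rw [← hk]
        push_cast at this; linarith
      have hkR : (3 : ℝ) ≤ (k : ℝ) := by exact_mod_cast hk3
      constructor <;> nlinarith
  obtain ⟨hh1, hh2⟩ := hAB
  have hnR : (7 : ℝ) ≤ (n : ℝ) := by exact_mod_cast hn
  have hA3 : (3 : ℝ) ≤ A := by rw [hA]; exact_mod_cast ha3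
  have hB4 : (4 : ℝ) ≤ B := by rw [hB]; exact_mod_cast hb4
  -- the quantity r
  set sq : ℝ := Real.sqrt (8 * (n : ℝ) - 15) with hsq
  have hsqnn : 0 ≤ 8 * (n : ℝ) - 15 := by linarith
  have hsq2 : sq ^ 2 = 8 * (n : ℝ) - 15 := Real.sq_sqrt hsqnn
  have hsq5 : 5 < sq := by
    have : Real.sqrt 25 < sq := by
      apply Real.sqrt_lt_sqrt (by norm_num)
      linarith
    rwa [show (25:ℝ) = 5 ^ 2 by norm_num, Real.sqrt_sq (by norm_num)] at this
  set r : ℝ := (1 + sq) / 2 with hrdef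
  have hr3 : 3 < r := by rw [hrdef]; linarith
  have hr2 : r ^ 2 = r + 2 * ((n : ℝ) - 2) := by
    rw [hrdef]; field_simp; nlinarith [hsq2]
  -- the cubic and its root
  set f : ℝ → ℝ := fun x => x ^ 3 - x ^ 2 - A * B * x + (A - 2) * B with hfdef
  have hfr : f r < 0 := by
    have hc1 : r ^ 3 = r ^ 2 + 2 * ((n:ℝ) - 2) * r := by
      linear_combination r * hr2
    have hgap : 1 ≤ A * B - 2 * ((n:ℝ) - 2) := by linarith
    have hrr : 3 * (A * B - 2 * ((n:ℝ) - 2)) < r * (A * B - 2 * ((n:ℝ) - 2)) := by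
      nlinarith
    show r ^ 3 - r ^ 2 - A * B * r + (A - 2) * B < 0
    nlinarith [hc1, hrr, hh2, hr2]
  set X : ℝ := r + A * B + 1 with hXdef
  have hrX : r ≤ X := by nlinarith
  have hfX : 0 < f X := by
    have hab11 : 11 ≤ A * B := by linarith
    have hX4 : A * B + 4 ≤ X := by linarith
    have hd : 0 ≤ (A - 2) * B := by nlinarith
    show 0 < X ^ 3 - X ^ 2 - A * B * X + (A - 2) * B
    nlinarith [hX4, hab11, hd]
  have hcont : ContinuousOn f (Set.Icc r X) := by
    apply Continuous.continuousOn; rw [hfdef]; continuity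
  have hIVT := intermediate_value_Icc hrX hcont
  have h0mem : (0 : ℝ) ∈ Set.Icc (f r) (f X) := ⟨le_of_lt hfr, le_of_lt hfX⟩
  obtain ⟨μ, hμmem, hμ0⟩ := hIVT h0mem
  have hrμ : r < μ := by
    rcases lt_or_eq_of_le hμmem.1 with h | h
    · exact h
    · exfalso; rw [← h] at hμ0; rw [hμ0] at hfr; exact lt_irrefl 0 hfr
  have hμ3 : 3 < μ := lt_trans hr3 hrμ
  -- eigenvector data
  set x : ℝ := B / (μ - 1) with hxdef
  set y : ℝ := B / μ with hydef
  have hμ1 : μ - 1 ≠ 0 := by intro h; nlinarith [hμ3]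
  have hμne : μ ≠ 0 := by intro h; nlinarith [hμ3]
  have e1 : x + B = μ * x := by
    rw [hxdef]; field_simp; ring
  have e2 : B = μ * y := by
    rw [hydef]; field_simp
  have e3 : 2 * x + (A - 2) * y = μ := by
    rw [hxdef, hydef]
    have hfμ : μ ^ 3 - μ ^ 2 - A * B * μ + (A - 2) * B = 0 := hμ0
    field_simp
    linear_combination (-1 : ℝ) * hfμ
  -- conclude
  letI : DecidableEq (Fin a ⊕ Fin b) := Classical.decEq _
  letI instKp : DecidableRel (KplusAB a b).Adj := Classical.decRel _
  letI : DecidableEq (Fin 2 ⊕ Fin t) := Classical.decEq _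
  letI instK2 : DecidableRel (K2JoinI t).Adj := Classical.decRel _
  have hveq := kplus_eig a b ha3 x y μ e1 e2 e3
  have hvne : (Sum.elim (fun i : Fin a => if (i : ℕ) ≤ 1 then x else y)
      (fun _ : Fin b => (1:ℝ))) ≠ 0 := by
    intro h
    have := congrFun h (Sum.inr ⟨0, by omega⟩)
    simp at this
  have hμspec : μ ∈ spectrum ℝ ((KplusAB a b).adjMatrix ℝ) :=
    mem_spectrum_of_eig _ hvne hveq
  have hr2' : r ^ 2 = r + 2 * ((t : ℕ) : ℝ) := by rw [hT]; exact hr2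
  have hupper : sSup (spectrum ℝ ((K2JoinI t).adjMatrix ℝ)) ≤ r := by
    apply Real.sSup_le
    · intro μ' hμ'
      exact k2_upper t hr3 hr2' hμ'
    · linarith
  have hlower : μ ≤ sSup (spectrum ℝ ((KplusAB a b).adjMatrix ℝ)) :=
    le_csSup (spec_bddAbove _) hμspec
  calc sSup (spectrum ℝ ((K2JoinI t).adjMatrix ℝ)) ≤ r := hupper
    _ < μ := hrμ
    _ ≤ sSup (spectrum ℝ ((KplusAB a b).adjMatrix ℝ)) := hlower
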